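/- Let X be a two-sided quaternionic Banach space, T ∈ B(X), and let s ∈ ℍ satisfy |s| > limsup_{n→∞} ‖Tⁿ‖^{1/n}. Then the series Σ_{n=0}^{∞} Tⁿ s^{−n−1} converges absolutely in the operator norm of B(X), the quaternion s belongs to the S-resolvent set ρ_S(T), and S_L^{-1}(s,T) = Σ_{n=0}^{∞} Tⁿ s^{−n−1}. -/

import Mathlib

open MulOpposite Filter

noncomputable section

local notation "ℍ" => Quaternion ℝ

variable {X : Type*} [NormedAddCommGroup X] [NormedSpace ℝ X] [CompleteSpace X]
  [Module ℍ X] [Module ℍᵐᵒᵖ X]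
  [IsScalarTower ℝ ℍ X] [IsScalarTower ℝ ℍᵐᵒᵖ X]
  [SMulCommClass ℝ ℍ X] [SMulCommClass ℝ ℍᵐᵒᵖ X]
  [SMulCommClass ℍ ℍᵐᵒᵖ X]
  [IsBoundedSMul ℍ X] [IsBoundedSMul ℍᵐᵒᵖ X]

/-- Left multiplication by a quaternion, as a bounded real-linear operator on `X`. -/
def lmulL (s : ℍ) : X →L[ℝ] X :=
  LinearMap.mkContinuous
    { toFun := fun v => s • v
      map_add' := fun u v => smul_add s u v
      map_smul' := fun r v => (smul_comm r s v).symm }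
    ‖s‖ (fun v => norm_smul_le s v)

/-- `T` is right `ℍ`-linear: `T (v q) = (T v) q`. -/
def RightLinear (T : X →L[ℝ] X) : Prop :=
  ∀ (q : ℍ) (v : X), T (op q • v) = op q • T v

/-- The operator `Q_s(T) = T² − 2 Re(s) T + |s|² I`. -/
def Qs (s : ℍ) (T : X →L[ℝ] X) : X →L[ℝ] X :=
  T * T - (2 * s.re) • T + (‖s‖ ^ 2 : ℝ) • (1 : X →L[ℝ] X)

/-- Invertibility in the algebra `B(X)` of bounded right `ℍ`-linear operators. -/
def InvertibleInB (A : X →L[ℝ] X) : Prop :=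
  ∃ B : X →L[ℝ] X, RightLinear B ∧ A * B = 1 ∧ B * A = 1

/-- The S-resolvent set of `T`. -/
def sResolventSet (T : X →L[ℝ] X) : Set ℍ :=
  {s : ℍ | InvertibleInB (Qs s T)}

/-- The S-spectrum of `T`. -/
def sSpectrum (T : X →L[ℝ] X) : Set ℍ :=
  {s : ℍ | ¬ InvertibleInB (Qs s T)}

/-- The left S-resolvent operator `S_L^{-1}(s,T) = Q_s(T)⁻¹ (conj(s) I − T)`. -/
def sResL (s : ℍ) (T : X →L[ℝ] X) : X →L[ℝ] X :=
  Ring.inverse (Qs s T) * (lmulL (star s) - T)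

/-- `T` is power-bounded: `sup_{n ≥ 1} ‖Tⁿ‖ < ∞`. -/
def PowerBounded (T : X →L[ℝ] X) : Prop :=
  ∃ C : ℝ, ∀ n : ℕ, 1 ≤ n → ‖T ^ n‖ ≤ C

/-- `p(T) = sup_{n ≥ 1} ‖Tⁿ‖`. -/
def pBound (T : X →L[ℝ] X) : ℝ :=
  ⨆ n : ℕ, ‖T ^ (n + 1)‖

set_option synthInstance.maxHeartbeats 1000000
set_option linter.unusedSectionVars false
set_option maxHeartbeats 1000000

lemma lmulL_apply' (q : ℍ) (v : X) : (lmulL q : X →L[ℝ] X) v = q • v := rfl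

lemma norm_lmulL_le (q : ℍ) : ‖(lmulL q : X →L[ℝ] X)‖ ≤ ‖q‖ :=
  LinearMap.mkContinuous_norm_le _ (norm_nonneg q) _

lemma lmulL_add' (p q : ℍ) : (lmulL (p + q) : X →L[ℝ] X) = lmulL p + lmulL q := by
  ext v; simp [lmulL_apply', add_smul]

lemma lmulL_sub' (p q : ℍ) : (lmulL (p - q) : X →L[ℝ] X) = lmulL p - lmulL q := by
  ext v; simp [lmulL_apply', sub_smul]

lemma lmulL_smul' (r : ℝ) (q : ℍ) : (lmulL (r • q) : X →L[ℝ] X) = r • lmulL q := by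
  ext v; simp only [lmulL_apply', ContinuousLinearMap.coe_smul', Pi.smul_apply]
  rw [smul_assoc]

lemma lmulL_one' : (lmulL 1 : X →L[ℝ] X) = 1 := by
  ext v; simp [lmulL_apply']

lemma lmulL_zero' : (lmulL 0 : X →L[ℝ] X) = 0 := by
  ext v; simp [lmulL_apply']

lemma lmulL_neg' (q : ℍ) : (lmulL (-q) : X →L[ℝ] X) = - lmulL q := by
  ext v; simp [lmulL_apply']

lemma rightLinear_one : RightLinear (1 : X →L[ℝ] X) := fun _ _ => rfl

lemma RightLinear.mul {A B : X →L[ℝ] X} (hA : RightLinear A) (hB : RightLinear B) :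
    RightLinear (A * B) := fun q v => by
  simp only [ContinuousLinearMap.mul_apply, hB q v, hA q (B v)]

lemma RightLinear.pow {T : X →L[ℝ] X} (hT : RightLinear T) (n : ℕ) : RightLinear (T ^ n) := by
  induction n with
  | zero => simpa using (rightLinear_one : RightLinear (1 : X →L[ℝ] X))
  | succ n ih => rw [pow_succ]; exact ih.mul hT

lemma RightLinear.smul {A : X →L[ℝ] X} (r : ℝ) (hA : RightLinear A) :
    RightLinear (r • A) := fun q v => by
  simp only [ContinuousLinearMap.coe_smul', Pi.smul_apply, hA q v]
  rw [smul_comm]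

/-- Telescoping partial sums. -/
lemma telescope_sum (T : X →L[ℝ] X) (a ρ : ℝ) (C : ℕ → X →L[ℝ] X)
    (hC : ∀ m, C m - (2 * a) • C (m + 1) + ρ ^ 2 • C (m + 2) = 0) (M : ℕ) :
    ∑ n ∈ Finset.range (M + 2),
      (T ^ (n + 2) * C n - (2 * a) • (T ^ (n + 1) * C n) + ρ ^ 2 • (T ^ n * C n))
      = (ρ ^ 2 • C 0 + T * (ρ ^ 2 • C 1 - (2 * a) • C 0))
        + (T ^ (M + 2) * (C M - (2 * a) • C (M + 1)) + T ^ (M + 3) * C (M + 1)) := by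
  induction M with
  | zero =>
    simp only [Finset.sum_range_succ, Finset.sum_range_zero, zero_add, pow_zero, pow_one,
      one_mul, mul_sub, mul_add, mul_smul_comm, smul_sub, smul_smul]
    module
  | succ M ih =>
    rw [Finset.sum_range_succ, ih]
    have h := hC M
    have hCM : C M = (2 * a) • C (M + 1) - ρ ^ 2 • C (M + 2) := by
      linear_combination (norm := module) h
    rw [hCM]
    simp only [show M + 1 + 1 = M + 2 from rfl, show M + 2 + 2 = M + 4 from rfl,
      show M + 2 + 1 = M + 3 from rfl, show M + 1 + 2 = M + 3 from rfl,
      show M + 1 + 3 = M + 4 from rfl, show M + 2 + 3 = M + 5 from rfl]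
    simp only [mul_sub, mul_add, mul_smul_comm, smul_sub, smul_smul]
    module

lemma Qs_mul (s : ℍ) (T D : X →L[ℝ] X) (n : ℕ) :
    Qs s T * (T ^ n * D)
      = T ^ (n + 2) * D - (2 * s.re) • (T ^ (n + 1) * D) + (‖s‖ ^ 2 : ℝ) • (T ^ n * D) := by
  have e1 : T * T * (T ^ n * D) = T ^ (n + 2) * D := by
    rw [mul_assoc, ← mul_assoc T (T ^ n) D, ← pow_succ', ← mul_assoc, ← pow_succ']
  have e2 : T * (T ^ n * D) = T ^ (n + 1) * D := by rw [← mul_assoc, ← pow_succ']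
  simp only [Qs, sub_mul, add_mul, smul_mul_assoc, one_mul, e1, e2]

lemma hasSum_telescope (T : X →L[ℝ] X) (a ρ : ℝ) (C : ℕ → X →L[ℝ] X)
    (hC : ∀ m, C m - (2 * a) • C (m + 1) + ρ ^ 2 • C (m + 2) = 0)
    (W : X →L[ℝ] X)
    (hW : HasSum (fun n => T ^ (n + 2) * C n - (2 * a) • (T ^ (n + 1) * C n)
      + ρ ^ 2 • (T ^ n * C n)) W)
    (hlim : Tendsto (fun M => T ^ (M + 2) * (C M - (2 * a) • C (M + 1)) + T ^ (M + 3) * C (M + 1))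
      atTop (nhds 0)) :
    W = ρ ^ 2 • C 0 + T * (ρ ^ 2 • C 1 - (2 * a) • C 0) := by
  have h1 : Tendsto (fun M : ℕ => ∑ n ∈ Finset.range (M + 2),
      (T ^ (n + 2) * C n - (2 * a) • (T ^ (n + 1) * C n) + ρ ^ 2 • (T ^ n * C n)))
      atTop (nhds W) := by
    have := hW.tendsto_sum_nat.comp (tendsto_add_atTop_nat 2)
    exact this
  have h2 : Tendsto (fun M : ℕ => (ρ ^ 2 • C 0 + T * (ρ ^ 2 • C 1 - (2 * a) • C 0))
      + (T ^ (M + 2) * (C M - (2 * a) • C (M + 1)) + T ^ (M + 3) * C (M + 1)))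
      atTop (nhds ((ρ ^ 2 • C 0 + T * (ρ ^ 2 • C 1 - (2 * a) • C 0)) + 0)) :=
    tendsto_const_nhds.add hlim
  rw [add_zero] at h2
  refine tendsto_nhds_unique h1 ?_
  refine h2.congr fun M => ?_
  exact (telescope_sum T a ρ C hC M).symm

lemma u_rec (c : ℝ) (hc : c ^ 2 + Real.sqrt (1 - c ^ 2) ^ 2 = 1) (n : ℕ) :
    (∑ k ∈ Finset.range (n + 3),
        (⟨c, Real.sqrt (1 - c ^ 2)⟩ : ℂ) ^ k * ((starRingEnd ℂ) ⟨c, Real.sqrt (1 - c ^ 2)⟩) ^ (n + 2 - k))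
      = ((2 * c : ℝ) : ℂ) * (∑ k ∈ Finset.range (n + 2),
          (⟨c, Real.sqrt (1 - c ^ 2)⟩ : ℂ) ^ k * ((starRingEnd ℂ) ⟨c, Real.sqrt (1 - c ^ 2)⟩) ^ (n + 1 - k))
        - ∑ k ∈ Finset.range (n + 1),
            (⟨c, Real.sqrt (1 - c ^ 2)⟩ : ℂ) ^ k * ((starRingEnd ℂ) ⟨c, Real.sqrt (1 - c ^ 2)⟩) ^ (n - k) := by
  set ζ : ℂ := ⟨c, Real.sqrt (1 - c ^ 2)⟩ with hζdef
  set w : ℂ := (starRingEnd ℂ) ζ with hwdef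
  have hζw : ζ * w = 1 := by
    rw [hwdef, Complex.mul_conj]
    norm_cast
    simpa [hζdef, Complex.normSq_apply, sq] using hc
  have hsum : ζ + w = ((2 * c : ℝ) : ℂ) := by
    rw [hwdef, Complex.add_conj]
  have h1 : w * (∑ k ∈ Finset.range (n + 2), ζ ^ k * w ^ (n + 1 - k))
      = (∑ k ∈ Finset.range (n + 3), ζ ^ k * w ^ (n + 2 - k)) - ζ ^ (n + 2) := by
    rw [Finset.mul_sum, Finset.sum_range_succ (fun k => ζ ^ k * w ^ (n + 2 - k)) (n + 2)]
    simp only [Nat.sub_self, pow_zero, mul_one, add_sub_cancel_right]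
    refine Finset.sum_congr rfl fun k hk => ?_
    have hk' : k ≤ n + 1 := Nat.lt_succ_iff.mp (Finset.mem_range.mp hk)
    have : n + 2 - k = (n + 1 - k) + 1 := by omega
    rw [this, pow_succ]
    ring
  have h2 : ζ * (∑ k ∈ Finset.range (n + 2), ζ ^ k * w ^ (n + 1 - k))
      = (∑ k ∈ Finset.range (n + 1), ζ ^ k * w ^ (n - k)) + ζ ^ (n + 2) := by
    rw [Finset.mul_sum, Finset.sum_range_succ (fun k => ζ * (ζ ^ k * w ^ (n + 1 - k))) (n + 1)]
    congr 1
    · refine Finset.sum_congr rfl fun k hk => ?_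
      have hk' : k ≤ n := Nat.lt_succ_iff.mp (Finset.mem_range.mp hk)
      have h3 : n + 1 - k = (n - k) + 1 := by omega
      calc ζ * (ζ ^ k * w ^ (n + 1 - k)) = (ζ ^ k * w ^ (n - k)) * (ζ * w) := by
            rw [h3, pow_succ]; ring
        _ = ζ ^ k * w ^ (n - k) := by rw [hζw, mul_one]
    · rw [Nat.sub_self, pow_zero, mul_one, ← pow_succ']
  have := congrArg₂ (· + ·) h2 h1
  rw [← add_mul, hsum] at this
  linear_combination -this

lemma norm_real_smul (r : ℝ) (A : X →L[ℝ] X) : ‖r • A‖ = |r| * ‖A‖ := by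
  rw [← Real.norm_eq_abs]; exact norm_smul r A


set_option maxHeartbeats 2000000

/-- If `|s| > limsup ‖Tⁿ‖^{1/n}`, then the series `Σ Tⁿ s^{−n−1}` converges
absolutely in operator norm, `s ∈ ρ_S(T)`, and `S_L^{-1}(s,T) = Σ_{n=0}^∞ Tⁿ s^{−n−1}`. -/
theorem sResL_eq_tsum (T : X →L[ℝ] X) (hT : RightLinear T) (s : ℍ)
    (hs : limsup (fun n : ℕ => ‖T ^ n‖ ^ (1 / (n : ℝ))) atTop < ‖s‖) :
    Summable (fun n : ℕ => ‖T ^ n * lmulL (s ^ (-(n : ℤ) - 1))‖) ∧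
    s ∈ sResolventSet T ∧
    sResL s T = ∑' n : ℕ, T ^ n * lmulL (s ^ (-(n : ℤ) - 1)) := by
  classical
  rw [show (sResL s T : X →L[ℝ] X) = Ring.inverse (Qs s T) * (lmulL (star s) - T) from rfl,
    show (sResolventSet T : Set ℍ) = {s : ℍ | ∃ B : X →L[ℝ] X,
      RightLinear B ∧ Qs s T * B = 1 ∧ B * Qs s T = 1} from rfl]
  set f : ℕ → ℝ := fun n => ‖T ^ n‖ ^ (1 / (n : ℝ)) with hfdef
  -- boundedness of f
  have hb : IsBoundedUnder (· ≤ ·) atTop f := by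
    refine isBoundedUnder_of ⟨max ‖T‖ 1, fun n => ?_⟩
    rcases Nat.eq_zero_or_pos n with h0 | h1
    · subst h0
      simp only [hfdef, Nat.cast_zero, div_zero, Real.rpow_zero]
      exact le_max_right _ _
    · refine le_trans ?_ (le_max_left ‖T‖ 1)
      have h2 : ‖T ^ n‖ ≤ ‖T‖ ^ n := norm_pow_le' T h1
      calc ‖T ^ n‖ ^ (1 / (n : ℝ)) ≤ (‖T‖ ^ n) ^ (1 / (n : ℝ)) :=
            Real.rpow_le_rpow (norm_nonneg _) h2 (by positivity)
        _ = ‖T‖ := by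
            rw [← Real.rpow_natCast ‖T‖ n, ← Real.rpow_mul (norm_nonneg T), mul_one_div,
              div_self (by exact_mod_cast h1.ne' : (n : ℝ) ≠ 0), Real.rpow_one]
  have h0 : 0 ≤ limsup f atTop :=
    le_limsup_of_frequently_le (Frequently.of_forall fun n =>
      Real.rpow_nonneg (norm_nonneg _) _) hb
  have hρ0 : 0 < ‖s‖ := lt_of_le_of_lt h0 hs
  have hsne : s ≠ 0 := norm_pos_iff.mp hρ0
  set ρ : ℝ := ‖s‖ with hρdef
  obtain ⟨r', hrr', hr'ρ⟩ : ∃ t, limsup f atTop < t ∧ t < ρ :=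
    ⟨(limsup f atTop + ρ) / 2, by linarith, by linarith⟩
  have hr'0 : 0 ≤ r' := le_of_lt (lt_of_le_of_lt h0 hrr')
  obtain ⟨x, hxdef⟩ : ∃ t : ℝ, t = r' / ρ := ⟨_, rfl⟩
  have hx0 : 0 ≤ x := hxdef ▸ div_nonneg hr'0 hρ0.le
  have hx1 : x < 1 := hxdef ▸ (div_lt_one hρ0).mpr hr'ρ
  -- eventual bound on ‖T^n‖
  have hev : ∀ᶠ n in atTop, ‖T ^ n‖ ≤ r' ^ n := by
    filter_upwards [eventually_lt_of_limsup_lt hrr' hb, eventually_ge_atTop 1] with n hn hn1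
    have hn0 : (n : ℝ) ≠ 0 := Nat.cast_ne_zero.mpr (by omega)
    have key : ‖T ^ n‖ = (‖T ^ n‖ ^ (1 / (n : ℝ))) ^ (n : ℕ) := by
      rw [← Real.rpow_natCast (‖T ^ n‖ ^ (1 / (n : ℝ))) n, ← Real.rpow_mul (norm_nonneg _),
        one_div, inv_mul_cancel₀ hn0, Real.rpow_one]
    rw [key]
    exact pow_le_pow_left₀ (Real.rpow_nonneg (norm_nonneg _) _) hn.le n
  have hev2 : ∀ᶠ M in atTop, ‖T ^ (M + 2)‖ ≤ r' ^ (M + 2) := (tendsto_add_atTop_nat 2).eventually hev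
  have hev3 : ∀ᶠ M in atTop, ‖T ^ (M + 3)‖ ≤ r' ^ (M + 3) := (tendsto_add_atTop_nat 3).eventually hev
  -- |Re s| ≤ ρ and quaternion quadratic identity
  have hre : |s.re| ≤ ρ := by
    have h3 : Quaternion.normSq s = ρ ^ 2 := by
      rw [Quaternion.normSq_eq_norm_mul_self]; rw [hρdef]; ring
    have h2 := Quaternion.normSq_def' s
    have h1 : s.re ^ 2 ≤ ρ ^ 2 := by
      nlinarith [sq_nonneg s.imI, sq_nonneg s.imJ, sq_nonneg s.imK]
    calc |s.re| = Real.sqrt (s.re ^ 2) := (Real.sqrt_sq_eq_abs _).symm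
      _ ≤ Real.sqrt (ρ ^ 2) := Real.sqrt_le_sqrt h1
      _ = ρ := Real.sqrt_sq hρ0.le
  have hcoe2 : ((ρ ^ 2 : ℝ) : ℍ) = star s * s := by
    rw [show (ρ ^ 2 : ℝ) = Quaternion.normSq s by
      rw [Quaternion.normSq_eq_norm_mul_self, hρdef]; ring]
    exact (Quaternion.star_mul_self s).symm
  have hquad : s * s - (2 * s.re) • s + (ρ ^ 2 : ℝ) • (1 : ℍ) = 0 := by
    have e1 : (2 * s.re : ℝ) • s = (s + star s) * s := by
      rw [Algebra.smul_def, show (algebraMap ℝ ℍ) (2 * s.re) = ((2 * s.re : ℝ) : ℍ) from rfl,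
        ← Quaternion.self_add_star']
    have e2 : (ρ ^ 2 : ℝ) • (1 : ℍ) = star s * s := by
      rw [Algebra.smul_def, mul_one, show (algebraMap ℝ ℍ) (ρ ^ 2) = ((ρ ^ 2 : ℝ) : ℍ) from rfl,
        hcoe2]
    rw [e1, e2]; noncomm_ring
  have hzrec : ∀ m : ℕ,
      s ^ (-(m : ℤ) - 1) - (2 * s.re) • s ^ (-(m : ℤ) - 2) + ρ ^ 2 • s ^ (-(m : ℤ) - 3) = 0 := by
    intro m
    have e1 : s ^ (-(m : ℤ) - 1) = s ^ (-(m : ℤ) - 3) * (s * s) := by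
      rw [show -(m : ℤ) - 1 = (-(m : ℤ) - 3) + 1 + 1 by ring, zpow_add_one₀ hsne,
        zpow_add_one₀ hsne, mul_assoc]
    have e2 : s ^ (-(m : ℤ) - 2) = s ^ (-(m : ℤ) - 3) * s := by
      rw [show -(m : ℤ) - 2 = (-(m : ℤ) - 3) + 1 by ring, zpow_add_one₀ hsne]
    rw [e1, e2, ← mul_smul_comm,
      show ρ ^ 2 • s ^ (-(m : ℤ) - 3) = s ^ (-(m : ℤ) - 3) * ((ρ ^ 2 : ℝ) • (1 : ℍ)) by
        rw [mul_smul_comm, mul_one],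
      ← mul_sub, ← mul_add, hquad, mul_zero]
  -- the complex sequence u and real coefficients d
  set c : ℝ := s.re / ρ with hcdef
  have hc1 : c ^ 2 ≤ 1 := by
    rw [hcdef, div_pow]
    rw [div_le_one (by positivity)]
    nlinarith [hre, abs_nonneg s.re, sq_abs s.re]
  have hcs : c ^ 2 + Real.sqrt (1 - c ^ 2) ^ 2 = 1 := by
    rw [Real.sq_sqrt (by linarith)]; ring
  set ζ : ℂ := (⟨c, Real.sqrt (1 - c ^ 2)⟩ : ℂ) with hζdef
  have hζabs : ‖ζ‖ = 1 := by
    rw [Complex.norm_def, Complex.normSq_apply]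
    rw [hζdef]
    simp only
    rw [show c * c + Real.sqrt (1 - c ^ 2) * Real.sqrt (1 - c ^ 2)
        = c ^ 2 + Real.sqrt (1 - c ^ 2) ^ 2 by ring, hcs, Real.sqrt_one]
  set u : ℕ → ℂ := fun n => ∑ k ∈ Finset.range (n + 1), ζ ^ k * ((starRingEnd ℂ) ζ) ^ (n - k)
    with hudef
  have hu0 : (u 0).re = 1 := by simp [hudef]
  have hu1 : (u 1).re = 2 * c := by
    have h9 : u 1 = (starRingEnd ℂ) ζ + ζ := by
      rw [hudef]
      simp [Finset.sum_range_succ]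
    rw [h9, add_comm, Complex.add_conj, Complex.ofReal_re]
  have hurec : ∀ n, (u (n + 2)).re = 2 * c * (u (n + 1)).re - (u n).re := by
    intro n
    have := u_rec c hcs n
    rw [hudef]
    simp only
    rw [show n + 2 + 1 = n + 3 from rfl, show n + 1 + 1 = n + 2 from rfl]
    rw [this, Complex.sub_re, Complex.re_ofReal_mul]
  set d : ℕ → ℝ := fun n => (u n).re / ρ ^ (n + 2) with hddef
  have hared : s.re = c * ρ := by rw [hcdef]; field_simp
  have hdrec : ∀ m, d m - 2 * s.re * d (m + 1) + ρ ^ 2 * d (m + 2) = 0 := by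
    intro m
    rw [hddef]
    simp only
    rw [hared, hurec m]
    have hρm : ρ ^ (m + 2) ≠ 0 := by positivity
    field_simp
    ring
  have hdb : ∀ n : ℕ, |d n| ≤ ((n : ℝ) + 1) / ρ ^ (n + 2) := by
    intro n
    have hub : |(u n).re| ≤ (n : ℝ) + 1 := by
      calc |(u n).re| ≤ ‖u n‖ := Complex.abs_re_le_norm _
        _ ≤ ∑ k ∈ Finset.range (n + 1), ‖ζ ^ k * ((starRingEnd ℂ) ζ) ^ (n - k)‖ := by
            rw [hudef]; exact norm_sum_le _ _
        _ = ∑ k ∈ Finset.range (n + 1), (1 : ℝ) := by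
            refine Finset.sum_congr rfl fun k _ => ?_
            rw [norm_mul, norm_pow, norm_pow, Complex.norm_conj, hζabs, one_pow, one_pow, mul_one]
        _ = (n : ℝ) + 1 := by simp
    rw [hddef]
    simp only
    rw [abs_div, abs_of_pos (by positivity : (0:ℝ) < ρ ^ (n + 2))]
    gcongr
  -- coefficient sequences
  set C₁ : ℕ → X →L[ℝ] X := fun n => d n • (1 : X →L[ℝ] X) with hC1def
  set C₂ : ℕ → X →L[ℝ] X := fun n => lmulL (s ^ (-(n : ℤ) - 1)) with hC2def
  have hC1 : ∀ m, C₁ m - (2 * s.re) • C₁ (m + 1) + ρ ^ 2 • C₁ (m + 2) = 0 := by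
    intro m
    rw [hC1def]
    simp only [smul_smul]
    rw [← sub_smul, ← add_smul, hdrec m, zero_smul]
  have hC2 : ∀ m, C₂ m - (2 * s.re) • C₂ (m + 1) + ρ ^ 2 • C₂ (m + 2) = 0 := by
    intro m
    rw [hC2def]
    simp only
    rw [show (-(↑(m + 1) : ℤ) - 1) = -(m : ℤ) - 2 by push_cast; ring,
      show (-(↑(m + 2) : ℤ) - 1) = -(m : ℤ) - 3 by push_cast; ring,
      ← lmulL_smul', ← lmulL_smul', ← lmulL_sub', ← lmulL_add', hzrec m, lmulL_zero']
  -- norms of coefficients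
  have hρz : ∀ n : ℕ, (ρ : ℝ) ^ (-(n : ℤ) - 1) = (ρ ^ (n + 1))⁻¹ := by
    intro n
    rw [show -(n : ℤ) - 1 = -(((n + 1 : ℕ)) : ℤ) by push_cast; ring, zpow_neg, zpow_natCast]
  have hnormC2 : ∀ k : ℕ, ‖C₂ k‖ ≤ (ρ ^ (k + 1))⁻¹ := by
    intro k
    rw [hC2def]
    refine (norm_lmulL_le _).trans ?_
    rw [norm_zpow, ← hρdef, hρz k]
  have hnorm1 : ‖(1 : X →L[ℝ] X)‖ ≤ 1 := by
    rw [ContinuousLinearMap.one_def]; exact ContinuousLinearMap.norm_id_le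
  have hnormC1 : ∀ k : ℕ, ‖C₁ k‖ ≤ |d k| := by
    intro k
    simp only [hC1def]
    rw [norm_real_smul]
    calc |d k| * ‖(1 : X →L[ℝ] X)‖ ≤ |d k| * 1 := by gcongr
      _ = |d k| := mul_one _
  -- summability of the main series (goal 1)
  have hsum1 : Summable (fun n : ℕ => ‖T ^ n * lmulL (s ^ (-(n : ℤ) - 1))‖) := by
    refine Summable.of_norm_bounded_eventually (g := fun n => ρ⁻¹ * x ^ n)
      ((summable_geometric_of_lt_one hx0 hx1).mul_left _) ?_
    rw [Nat.cofinite_eq_atTop]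
    filter_upwards [hev] with n hn
    rw [norm_norm]
    calc ‖T ^ n * lmulL (s ^ (-(n : ℤ) - 1))‖
        ≤ ‖T ^ n‖ * ‖(lmulL (s ^ (-(n : ℤ) - 1)) : X →L[ℝ] X)‖ := norm_mul_le _ _
      _ ≤ r' ^ n * (ρ ^ (n + 1))⁻¹ := by
          refine mul_le_mul hn ((norm_lmulL_le _).trans ?_) (norm_nonneg _) (pow_nonneg hr'0 n)
          rw [norm_zpow, ← hρdef, hρz n]
      _ = ρ⁻¹ * x ^ n := by
          simp only [hxdef, div_pow]
          rw [pow_succ, mul_inv]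
          field_simp
  -- summability of B's series
  have hwsum : Summable (fun n : ℕ => ((n : ℝ) + 1) * x ^ n) := by
    have h1 := summable_pow_mul_geometric_of_norm_lt_one 1
      (by rw [Real.norm_eq_abs, abs_of_nonneg hx0]; exact hx1 : ‖x‖ < 1)
    have h2 := summable_geometric_of_lt_one hx0 hx1
    have := h1.add h2
    refine this.congr fun n => ?_
    push_cast
    ring
  set w : ℕ → ℝ := fun n => ((n : ℝ) + 1) * x ^ n with hwdef
  have hw0 : Tendsto w atTop (nhds 0) := hwsum.tendsto_atTop_zero
  have hsum2 : Summable (fun n => d n • T ^ n) := by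
    refine Summable.of_norm ?_
    refine Summable.of_norm_bounded_eventually (g := fun n => (ρ ^ 2)⁻¹ * (((n : ℝ) + 1) * x ^ n))
      (hwsum.mul_left _) ?_
    rw [Nat.cofinite_eq_atTop]
    filter_upwards [hev] with n hn
    rw [norm_norm, norm_real_smul]
    calc |d n| * ‖T ^ n‖ ≤ (((n : ℝ) + 1) / ρ ^ (n + 2)) * r' ^ n := by
          refine mul_le_mul (hdb n) hn (norm_nonneg _) (by positivity)
      _ = (ρ ^ 2)⁻¹ * (((n : ℝ) + 1) * x ^ n) := by
          simp only [hxdef, div_pow]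
          rw [pow_add]
          field_simp
  set B : X →L[ℝ] X := ∑' n, d n • T ^ n with hBdef
  have hB : HasSum (fun n => d n • T ^ n) B := hsum2.hasSum
  set g : ℕ → X →L[ℝ] X := fun n => T ^ n * lmulL (s ^ (-(n : ℤ) - 1)) with hgdef
  have hgsum : Summable g := hsum1.of_norm
  -- boundary limits
  have hlim1 : Tendsto (fun M => T ^ (M + 2) * (C₁ M - (2 * s.re) • C₁ (M + 1))
      + T ^ (M + 3) * C₁ (M + 1)) atTop (nhds 0) := by
    have hg1 : Tendsto (fun M => x ^ 2 * w M + (2 * x) * w (M + 1) + x ^ 2 * w (M + 1))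
        atTop (nhds 0) := by
      have hw1 : Tendsto (fun M => w (M + 1)) atTop (nhds 0) :=
        hw0.comp (tendsto_add_atTop_nat 1)
      have := ((hw0.const_mul (x ^ 2)).add (hw1.const_mul (2 * x))).add (hw1.const_mul (x ^ 2))
      simpa using this
    refine squeeze_zero_norm' ?_ hg1
    filter_upwards [hev2, hev3] with M h2 h3
    have hd1 : |d M| ≤ ((M : ℝ) + 1) / ρ ^ (M + 2) := hdb M
    have hd2 : |d (M + 1)| ≤ ((M : ℝ) + 2) / ρ ^ (M + 3) := by
      have := hdb (M + 1)
      push_cast at this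
      convert this using 2 <;> ring
    have hsub : ‖C₁ M - (2 * s.re) • C₁ (M + 1)‖ ≤ |d M| + 2 * ρ * |d (M + 1)| := by
      refine (norm_sub_le _ _).trans ?_
      have h7 : ‖(2 * s.re) • C₁ (M + 1)‖ ≤ 2 * ρ * |d (M + 1)| := by
        rw [norm_real_smul]
        refine mul_le_mul ?_ (hnormC1 _) (norm_nonneg _) (by positivity)
        rw [abs_mul, abs_two]
        linarith
      linarith [hnormC1 M]
    calc ‖T ^ (M + 2) * (C₁ M - (2 * s.re) • C₁ (M + 1)) + T ^ (M + 3) * C₁ (M + 1)‖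
        ≤ ‖T ^ (M + 2)‖ * ‖C₁ M - (2 * s.re) • C₁ (M + 1)‖ + ‖T ^ (M + 3)‖ * ‖C₁ (M + 1)‖ :=
          (norm_add_le _ _).trans (by gcongr <;> [exact norm_mul_le _ _; exact norm_mul_le _ _])
      _ ≤ r' ^ (M + 2) * (|d M| + 2 * ρ * |d (M + 1)|) + r' ^ (M + 3) * |d (M + 1)| := by
          gcongr <;> first | exact h2 | exact h3 | exact hsub | exact hnormC1 _
      _ ≤ r' ^ (M + 2) * (((M : ℝ) + 1) / ρ ^ (M + 2) + 2 * ρ * (((M : ℝ) + 2) / ρ ^ (M + 3)))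
            + r' ^ (M + 3) * (((M : ℝ) + 2) / ρ ^ (M + 3)) := by
          gcongr <;> first | exact hd1 | exact hd2
      _ = x ^ 2 * w M + (2 * x) * w (M + 1) + x ^ 2 * w (M + 1) := by
          simp only [hwdef, hxdef, div_pow]
          push_cast
          field_simp
          ring
  have hlim2 : Tendsto (fun M => T ^ (M + 2) * (C₂ M - (2 * s.re) • C₂ (M + 1))
      + T ^ (M + 3) * C₂ (M + 1)) atTop (nhds 0) := by
    have hg2 : Tendsto (fun M : ℕ => 3 * r' * x ^ (M + 1) + r' * x ^ (M + 2)) atTop (nhds 0) := by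
      have hp : Tendsto (fun M : ℕ => x ^ M) atTop (nhds 0) :=
        tendsto_pow_atTop_nhds_zero_of_lt_one hx0 hx1
      have hp1 : Tendsto (fun M : ℕ => x ^ (M + 1)) atTop (nhds 0) :=
        hp.comp (tendsto_add_atTop_nat 1)
      have hp2 : Tendsto (fun M : ℕ => x ^ (M + 2)) atTop (nhds 0) :=
        hp.comp (tendsto_add_atTop_nat 2)
      have := (hp1.const_mul (3 * r')).add (hp2.const_mul r')
      simpa using this
    refine squeeze_zero_norm' ?_ hg2
    filter_upwards [hev2, hev3] with M h2 h3
    have hsub : ‖C₂ M - (2 * s.re) • C₂ (M + 1)‖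
        ≤ (ρ ^ (M + 1))⁻¹ + 2 * ρ * (ρ ^ (M + 2))⁻¹ := by
      refine (norm_sub_le _ _).trans ?_
      have h5 : ‖(2 * s.re) • C₂ (M + 1)‖ ≤ 2 * ρ * (ρ ^ (M + 2))⁻¹ := by
        rw [norm_real_smul]
        refine mul_le_mul ?_ (hnormC2 (M + 1)) (norm_nonneg _) (by positivity)
        rw [abs_mul, abs_two]
        linarith
      linarith [hnormC2 M]
    calc ‖T ^ (M + 2) * (C₂ M - (2 * s.re) • C₂ (M + 1)) + T ^ (M + 3) * C₂ (M + 1)‖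
        ≤ ‖T ^ (M + 2)‖ * ‖C₂ M - (2 * s.re) • C₂ (M + 1)‖ + ‖T ^ (M + 3)‖ * ‖C₂ (M + 1)‖ :=
          (norm_add_le _ _).trans (by gcongr <;> [exact norm_mul_le _ _; exact norm_mul_le _ _])
      _ ≤ r' ^ (M + 2) * ((ρ ^ (M + 1))⁻¹ + 2 * ρ * (ρ ^ (M + 2))⁻¹)
            + r' ^ (M + 3) * (ρ ^ (M + 2))⁻¹ := by
          gcongr <;> first | exact h2 | exact h3 | exact hsub | exact hnormC2 _
      _ = 3 * r' * x ^ (M + 1) + r' * x ^ (M + 2) := by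
          simp only [hxdef, div_pow]
          field_simp
          ring
  -- Q * B = 1 and B * Q = 1
  have hQd : ∀ n, Qs s T * (d n • T ^ n)
      = T ^ (n + 2) * C₁ n - (2 * s.re) • (T ^ (n + 1) * C₁ n) + ρ ^ 2 • (T ^ n * C₁ n) := by
    intro n
    have h4 := Qs_mul s T 1 n
    rw [← hρdef] at h4
    calc Qs s T * (d n • T ^ n) = d n • (Qs s T * (T ^ n * 1)) := by
          rw [mul_one, mul_smul_comm]
      _ = d n • (T ^ (n + 2) * 1 - (2 * s.re) • (T ^ (n + 1) * 1) + ρ ^ 2 • (T ^ n * 1)) := by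
          rw [h4]
      _ = T ^ (n + 2) * C₁ n - (2 * s.re) • (T ^ (n + 1) * C₁ n) + ρ ^ 2 • (T ^ n * C₁ n) := by
          rw [hC1def]
          simp only [mul_smul_comm, mul_one, smul_sub, smul_add, smul_smul]
          module
  have hcommQ : ∀ n : ℕ, Commute (T ^ n) (Qs s T) := by
    intro n
    have hTT : Commute (T ^ n) (T * T) :=
      ((Commute.refl T).pow_left n).mul_right ((Commute.refl T).pow_left n)
    have h1 : Commute (T ^ n) ((2 * s.re) • T) := ((Commute.refl T).pow_left n).smul_right _
    have h2 : Commute (T ^ n) ((‖s‖ ^ 2 : ℝ) • (1 : X →L[ℝ] X)) :=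
      (Commute.one_right _).smul_right _
    exact (hTT.sub_right h1).add_right h2
  have hdQ : ∀ n, (d n • T ^ n) * Qs s T
      = T ^ (n + 2) * C₁ n - (2 * s.re) • (T ^ (n + 1) * C₁ n) + ρ ^ 2 • (T ^ n * C₁ n) := by
    intro n
    rw [smul_mul_assoc, (hcommQ n).eq, ← mul_smul_comm]
    exact hQd n
  have hQBsum : HasSum (fun n => T ^ (n + 2) * C₁ n - (2 * s.re) • (T ^ (n + 1) * C₁ n)
      + ρ ^ 2 • (T ^ n * C₁ n)) (Qs s T * B) := by
    have := hB.mul_left (Qs s T)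
    simp only [hQd] at this
    exact this
  have hBQsum : HasSum (fun n => T ^ (n + 2) * C₁ n - (2 * s.re) • (T ^ (n + 1) * C₁ n)
      + ρ ^ 2 • (T ^ n * C₁ n)) (B * Qs s T) := by
    have := hB.mul_right (Qs s T)
    simp only [hdQ] at this
    exact this
  have hQB : Qs s T * B = 1 := by
    have h6 := hasSum_telescope T s.re ρ C₁ hC1 (Qs s T * B) hQBsum hlim1
    rw [h6, hC1def]
    simp only [smul_smul]
    rw [← sub_smul]
    have e0 : ρ ^ 2 * d 0 = 1 := by
      rw [hddef]
      simp only [hu0]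
      field_simp
    have e1 : ρ ^ 2 * d 1 - 2 * s.re * d 0 = 0 := by
      rw [hddef]
      simp only [hu0, hu1]
      rw [hared]
      field_simp
      ring
    rw [e0, e1, zero_smul, mul_zero, add_zero, one_smul]
  have hBQ : B * Qs s T = 1 := by
    rw [hBQsum.unique hQBsum, hQB]
  -- Q * S = lmulL (star s) - T
  have hQg : ∀ n, Qs s T * g n
      = T ^ (n + 2) * C₂ n - (2 * s.re) • (T ^ (n + 1) * C₂ n) + ρ ^ 2 • (T ^ n * C₂ n) := by
    intro n
    have h4 := Qs_mul s T (lmulL (s ^ (-(n : ℤ) - 1))) n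
    rw [← hρdef] at h4
    rw [hgdef, hC2def]
    exact h4
  have hQSsum : HasSum (fun n => T ^ (n + 2) * C₂ n - (2 * s.re) • (T ^ (n + 1) * C₂ n)
      + ρ ^ 2 • (T ^ n * C₂ n)) (Qs s T * ∑' n, g n) := by
    have := hgsum.hasSum.mul_left (Qs s T)
    simp only [hQg] at this
    exact this
  have hQS : Qs s T * (∑' n, g n) = lmulL (star s) - T := by
    have h6 := hasSum_telescope T s.re ρ C₂ hC2 _ hQSsum hlim2
    rw [h6, hC2def]
    simp only
    have ezero : (-(0 : ℤ) - 1 : ℤ) = -1 := by norm_num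
    have eone : (-(1 : ℤ) - 1 : ℤ) = -2 := by norm_num
    have hz0 : (s : ℍ) ^ (-(0 : ℕ) - 1 : ℤ) = s⁻¹ := by norm_num
    have e2 : (ρ ^ 2 : ℝ) • lmulL (s ^ (-(0:ℕ) - 1 : ℤ)) = (lmulL (star s) : X →L[ℝ] X) := by
      rw [← lmulL_smul']
      congr 1
      rw [hz0, Algebra.smul_def, show (algebraMap ℝ ℍ) (ρ ^ 2) = ((ρ ^ 2 : ℝ) : ℍ) from rfl,
        hcoe2, mul_assoc, mul_inv_cancel₀ hsne, mul_one]
    have e3 : (ρ ^ 2 : ℝ) • (lmulL (s ^ (-(1:ℕ) - 1 : ℤ)) : X →L[ℝ] X)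
        - (2 * s.re) • lmulL (s ^ (-(0:ℕ) - 1 : ℤ)) = -1 := by
      rw [← lmulL_smul', ← lmulL_smul', ← lmulL_sub']
      have hq : (ρ ^ 2 : ℝ) • s ^ (-(1:ℕ) - 1 : ℤ) - (2 * s.re) • s ^ (-(0:ℕ) - 1 : ℤ)
          = -1 := by
        have f1 : (s : ℍ) ^ (-(1:ℕ) - 1 : ℤ) = s ^ (-2 : ℤ) := by norm_num
        have f2 : (s : ℍ) ^ (-(0:ℕ) - 1 : ℤ) = s ^ (-2 : ℤ) * s := by
          rw [show (-(0:ℕ) - 1 : ℤ) = (-2 : ℤ) + 1 by norm_num, zpow_add_one₀ hsne]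
        rw [f1, f2, ← mul_smul_comm,
          show (ρ ^ 2 : ℝ) • (s : ℍ) ^ (-2 : ℤ) = s ^ (-2 : ℤ) * ((ρ ^ 2 : ℝ) • (1 : ℍ)) by
            rw [mul_smul_comm, mul_one],
          ← mul_sub]
        have hinner : (ρ ^ 2 : ℝ) • (1 : ℍ) - (2 * s.re) • s = -(s * s) := by
          linear_combination (norm := module) hquad
        rw [hinner, mul_neg]
        have : (s : ℍ) ^ (-2 : ℤ) * (s * s) = 1 := by
          rw [show ((s * s : ℍ)) = s ^ (2 : ℤ) from (zpow_two s).symm, ← zpow_add₀ hsne]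
          norm_num
        rw [this]
      rw [hq, lmulL_neg', lmulL_one']
    rw [e2, e3, mul_neg_one]
    abel
  -- right linearity of B
  have hBrl : RightLinear B := by
    intro q v
    have h1 : HasSum (fun n => (d n • T ^ n) (op q • v)) (B (op q • v)) :=
      hB.mapL (ContinuousLinearMap.apply ℝ X (op q • v))
    have h2 : HasSum (fun n => (d n • T ^ n) v) (B v) :=
      hB.mapL (ContinuousLinearMap.apply ℝ X v)
    have h3 : HasSum (fun n => op q • ((d n • T ^ n) v)) (op q • B v) := h2.const_smul (op q)
    have h4 : (fun n => (d n • T ^ n) (op q • v)) = fun n => op q • ((d n • T ^ n) v) := by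
      funext n
      simp only [ContinuousLinearMap.coe_smul', Pi.smul_apply, (hT.pow n) q v]
      rw [smul_comm]
    rw [h4] at h1
    exact h1.unique h3
  refine ⟨hsum1, ⟨B, hBrl, hQB, hBQ⟩, ?_⟩
  have hRinv : Ring.inverse (Qs s T) = B := by
    rw [show Qs s T = ((⟨Qs s T, B, hQB, hBQ⟩ : (X →L[ℝ] X)ˣ) : X →L[ℝ] X) from rfl,
      Ring.inverse_unit]
    rfl
  rw [hRinv, ← hQS, ← mul_assoc, hBQ, one_mul, hgdef]
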